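/- Let f : Set D → Set D be distributive over union, and define its representation relation R_f ⊆ (Option D) × (Option D) by: (none, none) ∈ R_f; (none, some d) ∈ R_f iff d ∈ f(∅); and (some d₁, some d₂) ∈ R_f iff d₂ ∈ f({d₁}) and d₂ ∉ f(∅). Then for any subset D₀ ⊆ D and any d ∈ D, d ∈ f(D₀) if and only if (none, some d) ∈ R_f or there exists d' ∈ D₀ with (some d', some d) ∈ R_f. -/

import Mathlib

def repRel {D : Type*} (f : Set D → Set D) : Option D → Option D → Prop
  | none, none => True
  | none, some d => d ∈ f ∅
  | some d₁, some d₂ => d₂ ∈ f {d₁} ∧ d₂ ∉ f ∅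
  | some _, none => False

theorem stmt_3 {D : Type*} [Finite D] (f : Set D → Set D)
    (hf : ∀ X Y : Set D, f (X ∪ Y) = f X ∪ f Y) (D₀ : Set D) (d : D) :
    d ∈ f D₀ ↔ repRel f none (some d) ∨ ∃ d' ∈ D₀, repRel f (some d') (some d) := by
  have hmono : ∀ X Y : Set D, X ⊆ Y → f X ⊆ f Y := by
    intro X Y hXY
    have : f Y = f X ∪ f Y := by
      rw [← hf]; rw [Set.union_eq_self_of_subset_left hXY]
    rw [this]; exact Set.subset_union_left
  have hsub : ∀ S : Set D, f S ⊆ f ∅ ∪ ⋃ x ∈ S, f {x} := by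
    intro S
    have hfin : S.Finite := Set.toFinite S
    refine Set.Finite.induction_on (motive := fun s _ => f s ⊆ f ∅ ∪ ⋃ x ∈ s, f {x}) S hfin Set.subset_union_left ?_
    intro a s ha _ ih
    · have : f (insert a s) = f {a} ∪ f s := by
        rw [Set.insert_eq, hf]
      rw [this]
      intro x hx
      rcases hx with hx | hx
      · exact Or.inr (Set.mem_biUnion (Set.mem_insert a s) hx)
      · rcases ih hx with h | h
        · exact Or.inl h
        · rcases Set.mem_iUnion₂.mp h with ⟨y, hy, hxy⟩
          exact Or.inr (Set.mem_biUnion (Set.mem_insert_of_mem a hy) hxy)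
  constructor
  · intro hd
    by_cases h0 : d ∈ f ∅
    · exact Or.inl h0
    · rcases hsub D₀ hd with h | h
      · exact absurd h h0
      · rcases Set.mem_iUnion₂.mp h with ⟨d', hd', hdd⟩
        exact Or.inr ⟨d', hd', hdd, h0⟩
  · rintro (h | ⟨d', hd', h1, _⟩)
    · exact hmono ∅ D₀ (Set.empty_subset _) h
    · exact hmono {d'} D₀ (Set.singleton_subset_iff.mpr hd') h1
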